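/- Let m, n be integers with |m| ≥ 2 and |n| ≥ 2, and let q ≥ 1 be a finite (m,n)-phenotype, i.e. every prime p dividing q satisfies v_p(m) = v_p(n) < v_p(q). Let (l_j)_{j ≥ 0} be a sequence of positive integers such that: (i) for every prime p with v_p(m) < v_p(n), v_p(l_0) = v_p(m); (ii) for every prime p with v_p(m) = v_p(n), v_p(l_0) = max(v_p(q), v_p(m)); and (iii) for every j ≥ 0, l_{j+1} is the smallest positive integer satisfying l_{j+1} / gcd(l_{j+1}, |n|) = l_j / gcd(l_j, |m|). Then there exists a rank r such that l_j = q for all j ≥ r. -/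

import Mathlib

/-- For positive `k`, the factorization of `k / gcd k N`. -/
lemma factorization_div_gcd {k N : ℕ} (hk : k ≠ 0) (hN : N ≠ 0) (r : ℕ) :
    (k / Nat.gcd k N).factorization r =
      k.factorization r - min (k.factorization r) (N.factorization r) := by
  rw [Nat.factorization_div (Nat.gcd_dvd_left k N), Finsupp.tsub_apply,
    Nat.factorization_gcd hk hN, Finsupp.inf_apply]

/-- Valuation of the least solution of the transfer equation. -/
lemma step_val {M N : ℕ} (hM : M ≠ 0) (hN : N ≠ 0) {Lj L : ℕ} (hLj : Lj ≠ 0)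
    (hIsLeast : IsLeast {k : ℕ | 0 < k ∧ k / Nat.gcd k N = Lj / Nat.gcd Lj M} L)
    {p : ℕ} (hp : p.Prime) :
    L.factorization p = if Lj.factorization p ≤ M.factorization p then 0
      else Lj.factorization p - M.factorization p + N.factorization p := by
  obtain ⟨⟨hLpos, hLeq⟩, hmin⟩ := hIsLeast
  set t := Lj / Nat.gcd Lj M with ht
  have ht_pos : 0 < t :=
    Nat.div_pos (Nat.le_of_dvd (Nat.pos_of_ne_zero hLj) (Nat.gcd_dvd_left _ _))
      (Nat.gcd_pos_of_pos_left _ (Nat.pos_of_ne_zero hLj))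
  have htval : ∀ r, t.factorization r =
      Lj.factorization r - min (Lj.factorization r) (M.factorization r) :=
    factorization_div_gcd hLj hM
  have hE : ∀ r, L.factorization r - min (L.factorization r) (N.factorization r) =
      t.factorization r := by
    intro r
    rw [← factorization_div_gcd hLpos.ne' hN r, hLeq]
  by_cases hcase : Lj.factorization p ≤ M.factorization p
  · simp only [hcase, if_true]
    -- here `t.factorization p = 0`; show `L.factorization p = 0` by minimality
    have htp : t.factorization p = 0 := by rw [htval]; omega
    by_contra h0
    have hpL : p ∣ L := by
      rw [Nat.Prime.dvd_iff_one_le_factorization hp hLpos.ne']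
      omega
    have hL'pos : 0 < L / p := Nat.div_pos (Nat.le_of_dvd hLpos hpL) hp.pos
    have hLval : ∀ r, (L / p).factorization r =
        L.factorization r - (if p = r then 1 else 0) := by
      intro r
      rw [Nat.factorization_div hpL, Finsupp.tsub_apply, hp.factorization,
        Finsupp.single_apply]
    have hLN : L.factorization p ≤ N.factorization p := by
      have := hE p
      omega
    have hmem : L / p ∈ {k : ℕ | 0 < k ∧ k / Nat.gcd k N = Lj / Nat.gcd Lj M} := by
      refine ⟨hL'pos, ?_⟩
      have h1 : (L / p / Nat.gcd (L / p) N) ≠ 0 :=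
        (Nat.div_pos (Nat.le_of_dvd hL'pos (Nat.gcd_dvd_left _ _))
          (Nat.gcd_pos_of_pos_left _ hL'pos)).ne'
      refine Nat.eq_of_factorization_eq h1 ht_pos.ne' fun r => ?_
      rw [factorization_div_gcd hL'pos.ne' hN r]
      rcases eq_or_ne p r with rfl | hpr
      · rw [hLval p]
        simp only [if_pos rfl, htp, if_true]
        rw [← ht]
        omega
      · rw [hLval r]
        simp only [if_neg hpr]
        have := hE r
        rw [← ht]
        omega
    have hle : L ≤ L / p := hmin hmem
    have hlt : L / p < L := Nat.div_lt_self hLpos hp.one_lt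
    omega
  · simp only [hcase, if_false]
    have htp : t.factorization p =
        Lj.factorization p - M.factorization p := by rw [htval]; omega
    have := hE p
    omega

theorem label_sequence_eventually_phenotype (m n : ℤ)
    (hm : 2 ≤ m.natAbs) (hn : 2 ≤ n.natAbs)
    (q : ℕ) (hq : 1 ≤ q)
    (hqph : ∀ p : ℕ, p.Prime → p ∣ q →
      m.natAbs.factorization p = n.natAbs.factorization p ∧
        n.natAbs.factorization p < q.factorization p)
    (l : ℕ → ℕ) (hpos : ∀ j, 0 < l j)
    (h0lt : ∀ p : ℕ, p.Prime →
      m.natAbs.factorization p < n.natAbs.factorization p →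
      (l 0).factorization p = m.natAbs.factorization p)
    (h0eq : ∀ p : ℕ, p.Prime →
      m.natAbs.factorization p = n.natAbs.factorization p →
      (l 0).factorization p = max (q.factorization p) (m.natAbs.factorization p))
    (hstep : ∀ j : ℕ, IsLeast {k : ℕ | 0 < k ∧
      k / Nat.gcd k n.natAbs = l j / Nat.gcd (l j) m.natAbs} (l (j + 1))) :
    ∃ r : ℕ, ∀ j : ℕ, r ≤ j → l j = q := by
  have hM : m.natAbs ≠ 0 := by omega
  have hN : n.natAbs ≠ 0 := by omega
  -- the valuation dynamics
  have hval : ∀ j : ℕ, ∀ p : ℕ, p.Prime →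
      (l (j + 1)).factorization p =
        if (l j).factorization p ≤ m.natAbs.factorization p then 0
        else (l j).factorization p - m.natAbs.factorization p
          + n.natAbs.factorization p := by
    intro j p hp
    exact step_val hM hN (hpos j).ne' (hstep j) hp
  refine ⟨l 0 + 1, fun j hj => ?_⟩
  refine Nat.eq_of_factorization_eq (hpos j).ne' (by omega) fun p => ?_
  by_cases hp : p.Prime
  · -- once zero, stays zero
    have hzero : ∀ i, (l i).factorization p = 0 → ∀ d, (l (i + d)).factorization p = 0 := by
      intro i h0 d
      induction d with
      | zero => exact h0
      | succ d ih =>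
        rw [← Nat.add_assoc, hval (i + d) p hp, ih]
        simp
    rcases lt_trichotomy (m.natAbs.factorization p) (n.natAbs.factorization p) with
      hlt | heq | hgt
    · -- v_p(m) < v_p(n): p does not divide q, and l becomes 0 from step 1
      have hq0 : q.factorization p = 0 := by
        rcases (Nat.factorization_eq_zero_iff q p).mpr with h
        by_contra hne
        have hdvd : p ∣ q := by
          rw [hp.dvd_iff_one_le_factorization (by omega)]
          omega
        exact absurd (hqph p hp hdvd).1 (by omega)
      have h1 : (l 1).factorization p = 0 := by
        rw [hval 0 p hp, h0lt p hp hlt]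
        simp
      have := hzero 1 h1 (j - 1)
      rw [show 1 + (j - 1) = j by omega] at this
      rw [this, hq0]
    · by_cases hpq : p ∣ q
      · -- fixed point at v_p(q)
        obtain ⟨_, hlt'⟩ := hqph p hp hpq
        have hfix : ∀ i, (l i).factorization p = q.factorization p := by
          intro i
          induction i with
          | zero => rw [h0eq p hp heq]; omega
          | succ i ih =>
            rw [hval i p hp, ih, if_neg (by omega)]
            omega
        rw [hfix j]
      · have hq0 : q.factorization p = 0 := by
          simp [Nat.factorization_eq_zero_iff, hpq]
        have h1 : (l 1).factorization p = 0 := by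
          rw [hval 0 p hp, h0eq p hp heq, hq0]
          simp
        have := hzero 1 h1 (j - 1)
        rw [show 1 + (j - 1) = j by omega] at this
        rw [this, hq0]
    · -- v_p(m) > v_p(n): strictly decreasing until 0
      have hq0 : q.factorization p = 0 := by
        by_contra hne
        have hdvd : p ∣ q := by
          rw [hp.dvd_iff_one_le_factorization (by omega)]
          omega
        exact absurd (hqph p hp hdvd).1 (by omega)
      have hdec : ∀ i, (l i).factorization p = 0 ∨
          (l i).factorization p + i ≤ (l 0).factorization p := by
        intro i
        induction i with
        | zero => right; omega
        | succ i ih =>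
          rw [hval i p hp]
          by_cases hc : (l i).factorization p ≤ m.natAbs.factorization p
          · left; rw [if_pos hc]
          · rw [if_neg hc]
            right
            rcases ih with h | h
            · omega
            · omega
      have hlt0 : (l 0).factorization p < l 0 := Nat.factorization_lt p (hpos 0).ne'
      rcases hdec j with h | h
      · rw [h, hq0]
      · omega
  · rw [Nat.factorization_eq_zero_of_not_prime _ hp,
      Nat.factorization_eq_zero_of_not_prime _ hp]
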